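/- Let E and F be finite-dimensional real inner product spaces, let B ⊆ E be an open convex set, let λ ≥ 1, and let f : B → F be differentiable with ‖Df_z‖ ≤ λ (operator norm) for every z ∈ B. Then the following are equivalent: (i) there exists K > 0 such that δ(Γ_{Df_z}, Γ_{Df_w}) ≤ K·‖(z, f(z)) − (w, f(w))‖ for all z, w ∈ B (the norm being the Euclidean product norm on E × F); (ii) there exists L > 0 such that ‖Df_z − Df_w‖ ≤ L·‖z − w‖ for all z, w ∈ B. -/

import Mathlib

open Set Filter

/-- The distance `δ(L₁, L₂)`: the Hausdorff distance between `L₁ ∩ 𝕊` and `L₂ ∩ 𝕊`,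
where `𝕊` is the unit sphere. -/
noncomputable def sphereDist {X : Type*} [NormedAddCommGroup X] (S T : Set X) : ℝ :=
  Metric.hausdorffDist (S ∩ Metric.sphere 0 1) (T ∩ Metric.sphere 0 1)

/-- The graph `Γ_A = {(u, A u) : u ∈ E}` of a continuous linear map `A : E → F`, as a
subset of `E × F` equipped with the Euclidean product norm `‖(u,v)‖ = (‖u‖² + ‖v‖²)^(1/2)`. -/
def graphSet {E F : Type*} [NormedAddCommGroup E] [InnerProductSpace ℝ E]
    [NormedAddCommGroup F] [InnerProductSpace ℝ F] (A : E →L[ℝ] F) :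
    Set (WithLp 2 (E × F)) :=
  {p | (WithLp.equiv 2 (E × F) p).2 = A (WithLp.equiv 2 (E × F) p).1}

section Aux

set_option linter.unusedSectionVars false

variable {E F : Type*} [NormedAddCommGroup E] [InnerProductSpace ℝ E]
  [NormedAddCommGroup F] [InnerProductSpace ℝ F]

private lemma aux_norm_mk (a : E) (b : F) :
    ‖(WithLp.equiv 2 (E × F)).symm (a, b)‖ = Real.sqrt (‖a‖ ^ 2 + ‖b‖ ^ 2) := by
  rw [WithLp.prod_norm_eq_of_L2]; rfl

private lemma aux_fst_le (p : WithLp 2 (E × F)) : ‖p.fst‖ ≤ ‖p‖ := by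
  rw [WithLp.prod_norm_eq_of_L2]
  calc ‖p.fst‖ = Real.sqrt (‖p.fst‖ ^ 2) := (Real.sqrt_sq (norm_nonneg _)).symm
  _ ≤ _ := Real.sqrt_le_sqrt (by nlinarith [sq_nonneg ‖p.snd‖])

private lemma aux_snd_le (p : WithLp 2 (E × F)) : ‖p.snd‖ ≤ ‖p‖ := by
  rw [WithLp.prod_norm_eq_of_L2]
  calc ‖p.snd‖ = Real.sqrt (‖p.snd‖ ^ 2) := (Real.sqrt_sq (norm_nonneg _)).symm
  _ ≤ _ := Real.sqrt_le_sqrt (by nlinarith [sq_nonneg ‖p.fst‖])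

private lemma aux_norm_mk_le (a : E) (b : F) :
    ‖(WithLp.equiv 2 (E × F)).symm (a, b)‖ ≤ ‖a‖ + ‖b‖ := by
  rw [aux_norm_mk]
  calc Real.sqrt (‖a‖ ^ 2 + ‖b‖ ^ 2) ≤ Real.sqrt ((‖a‖ + ‖b‖) ^ 2) :=
        Real.sqrt_le_sqrt (by nlinarith [norm_nonneg a, norm_nonneg b])
  _ = ‖a‖ + ‖b‖ := Real.sqrt_sq (by positivity)

/-- Normalization of a nonzero graph point lies in the graph-sphere intersection. -/
private lemma aux_normalized_mem (A : E →L[ℝ] F) {u : E} (hu : u ≠ 0) :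
    ‖(WithLp.equiv 2 (E × F)).symm (u, A u)‖⁻¹ • (WithLp.equiv 2 (E × F)).symm (u, A u) ∈
      graphSet A ∩ Metric.sphere 0 1 := by
  set r : WithLp 2 (E × F) := (WithLp.equiv 2 (E × F)).symm (u, A u) with hr
  have hrne : r ≠ 0 := by
    intro h
    apply hu
    have : (WithLp.equiv 2 (E × F)) r = (u, A u) := rfl
    rw [h] at this
    exact congrArg Prod.fst this.symm
  have hN : (0 : ℝ) < ‖r‖ := norm_pos_iff.mpr hrne
  constructor
  · show (WithLp.equiv 2 (E × F) (‖r‖⁻¹ • r)).2 = A (WithLp.equiv 2 (E × F) (‖r‖⁻¹ • r)).1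
    have h1 : (WithLp.equiv 2 (E × F)) (‖r‖⁻¹ • r) = ‖r‖⁻¹ • (u, A u) := by
      rfl
    rw [h1]
    simp
  · simp [mem_sphere_zero_iff_norm, norm_smul, abs_of_pos (inv_pos.mpr hN),
      inv_mul_cancel₀ hN.ne']

/-- The unit sphere part of the graph is nonempty when `E` is nontrivial. -/
private lemma aux_graph_sphere_nonempty [Nontrivial E] (A : E →L[ℝ] F) :
    (graphSet A ∩ Metric.sphere (0 : WithLp 2 (E × F)) 1).Nonempty := by
  obtain ⟨e, he⟩ := (NormedSpace.sphere_nonempty (x := (0 : E)) (r := 1)).mpr zero_le_one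
  rw [Metric.mem_sphere, dist_zero_right] at he
  have hene : e ≠ 0 := by intro h; rw [h, norm_zero] at he; exact one_ne_zero he.symm
  exact ⟨_, aux_normalized_mem A hene⟩

/-- One-sided Hausdorff estimate: every point of `Γ_A ∩ 𝕊` is within `2‖A - B‖` of
`Γ_B ∩ 𝕊`. -/
private lemma aux_exists_close (A B : E →L[ℝ] F) (p : WithLp 2 (E × F))
    (hp : p ∈ graphSet A ∩ Metric.sphere 0 1) :
    ∃ q ∈ graphSet B ∩ Metric.sphere (0 : WithLp 2 (E × F)) 1, dist p q ≤ 2 * ‖A - B‖ := by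
  obtain ⟨hpg, hps⟩ := hp
  rw [Metric.mem_sphere, dist_zero_right] at hps
  have hpsnd : p.snd = A p.fst := hpg
  have hpeq : p = (WithLp.equiv 2 (E × F)).symm (p.fst, A p.fst) := by
    rw [← hpsnd]; rfl
  have hune : p.fst ≠ 0 := by
    intro h
    rw [hpeq, h] at hps
    norm_num [aux_norm_mk] at hps
  set u : E := p.fst with hu
  set r : WithLp 2 (E × F) := (WithLp.equiv 2 (E × F)).symm (u, B u) with hr
  have hq := aux_normalized_mem B hune
  refine ⟨‖r‖⁻¹ • r, hq, ?_⟩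
  have hNpos : (0 : ℝ) < ‖r‖ := by
    have hrne : r ≠ 0 := by
      intro h
      apply hune
      have : (WithLp.equiv 2 (E × F)) r = (u, B u) := rfl
      rw [h] at this
      exact congrArg Prod.fst this.symm
    exact norm_pos_iff.mpr hrne
  have hAB : ‖A u - B u‖ ≤ ‖A - B‖ := by
    have h1 : ‖(A - B) u‖ ≤ ‖A - B‖ * ‖u‖ := (A - B).le_opNorm u
    have h2 : ‖u‖ ≤ 1 := hps ▸ aux_fst_le p
    rw [ContinuousLinearMap.sub_apply] at h1
    nlinarith [norm_nonneg (A - B), norm_nonneg u]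
  have hpr : ‖p - r‖ = ‖A u - B u‖ := by
    have : p - r = (WithLp.equiv 2 (E × F)).symm ((0 : E), A u - B u) := by
      rw [hpeq, hr, WithLp.equiv_symm_apply, ← WithLp.toLp_sub, Prod.mk_sub_mk, sub_self]
    rw [this, aux_norm_mk]
    simp
  have hrq : ‖r - ‖r‖⁻¹ • r‖ = |‖r‖ - 1| := by
    have h1 : r - ‖r‖⁻¹ • r = (1 - ‖r‖⁻¹) • r := by rw [sub_smul, one_smul]
    rw [h1, norm_smul, Real.norm_eq_abs,
      show |1 - ‖r‖⁻¹| * ‖r‖ = |(1 - ‖r‖⁻¹) * ‖r‖| by rw [abs_mul, abs_of_pos hNpos]]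
    congr 1
    field_simp
  have habs : |‖r‖ - 1| ≤ ‖A u - B u‖ := by
    have := abs_norm_sub_norm_le r p
    rw [norm_sub_rev r p, hpr] at this
    rw [← hps]
    exact this
  calc dist p ((‖r‖⁻¹ : ℝ) • r) ≤ ‖p - r‖ + ‖r - ‖r‖⁻¹ • r‖ := by
        rw [dist_eq_norm]
        exact norm_sub_le_norm_sub_add_norm_sub p r _
  _ ≤ ‖A u - B u‖ + ‖A u - B u‖ := by rw [hpr, hrq]; linarith
  _ ≤ 2 * ‖A - B‖ := by linarith

/-- Upper estimate for the Grassmannian distance of graphs. -/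
private lemma aux_sphereDist_le (A B : E →L[ℝ] F) :
    sphereDist (graphSet A) (graphSet B) ≤ 2 * ‖A - B‖ := by
  apply Metric.hausdorffDist_le_of_mem_dist (by positivity)
  · exact fun p hp => aux_exists_close A B p hp
  · intro p hp
    obtain ⟨q, hq, hd⟩ := aux_exists_close B A p hp
    exact ⟨q, hq, by rwa [norm_sub_rev] at hd⟩

/-- Key estimate on unit vectors: `‖(A - B)u‖` is controlled by the Grassmannian
distance of the graphs. -/
private lemma aux_unit_est [Nontrivial E] (A B : E →L[ℝ] F) {lam : ℝ} (hlam : 1 ≤ lam)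
    (hA : ‖A‖ ≤ lam) (hB : ‖B‖ ≤ lam) {u : E} (hu1 : ‖u‖ = 1) :
    ‖(A - B) u‖ ≤ (1 + lam) ^ 2 * sphereDist (graphSet A) (graphSet B) := by
  have hune : u ≠ 0 := by intro h; rw [h, norm_zero] at hu1; exact one_ne_zero hu1.symm
  set r : WithLp 2 (E × F) := (WithLp.equiv 2 (E × F)).symm (u, A u) with hr
  set p : WithLp 2 (E × F) := ‖r‖⁻¹ • r with hpdef
  have hp := aux_normalized_mem A hune
  have hAu : ‖A u‖ ≤ lam := by
    have := A.le_opNorm u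
    rw [hu1, mul_one] at this
    linarith
  have hNpos : (0 : ℝ) < ‖r‖ := by
    have : (1 : ℝ) ≤ ‖r‖ := by
      have := aux_fst_le r
      have hf : (r.fst : E) = u := rfl
      rw [hf, hu1] at this
      exact this
    linarith
  have hNle : ‖r‖ ≤ 1 + lam := by
    rw [hr, aux_norm_mk, hu1]
    calc Real.sqrt (1 ^ 2 + ‖A u‖ ^ 2) ≤ Real.sqrt ((1 + lam) ^ 2) :=
          Real.sqrt_le_sqrt (by nlinarith [norm_nonneg (A u)])
    _ = 1 + lam := Real.sqrt_sq (by linarith)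
  set S := graphSet A ∩ Metric.sphere (0 : WithLp 2 (E × F)) 1 with hS
  set T := graphSet B ∩ Metric.sphere (0 : WithLp 2 (E × F)) 1 with hT
  have hSne : S.Nonempty := aux_graph_sphere_nonempty A
  have hTne : T.Nonempty := aux_graph_sphere_nonempty B
  have hSb : Bornology.IsBounded S := Metric.isBounded_sphere.subset inter_subset_right
  have hTb : Bornology.IsBounded T := Metric.isBounded_sphere.subset inter_subset_right
  have fin : EMetric.hausdorffEdist S T ≠ ⊤ :=
    Metric.hausdorffEdist_ne_top_of_nonempty_of_bounded hSne hTne hSb hTb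
  have key : ∀ q ∈ T, ‖(A - B) u‖ ≤ (1 + lam) ^ 2 * dist p q := by
    intro q hq
    obtain ⟨hqg, hqs⟩ := hq
    have hqsnd : q.snd = B q.fst := hqg
    have h1 : ‖(p - q).fst‖ ≤ dist p q := by rw [dist_eq_norm]; exact aux_fst_le _
    have h2 : ‖(p - q).snd‖ ≤ dist p q := by rw [dist_eq_norm]; exact aux_snd_le _
    have hfst : (p - q).fst = ‖r‖⁻¹ • u - q.fst := rfl
    have hsnd : (p - q).snd = ‖r‖⁻¹ • (A u) - B q.fst := by
      show ‖r‖⁻¹ • (A u) - q.snd = _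
      rw [hqsnd]
    have hid : (‖r‖⁻¹ : ℝ) • ((A - B) u) = (p - q).snd - B ((p - q).fst) := by
      rw [hfst, hsnd]
      simp only [ContinuousLinearMap.sub_apply, smul_sub, map_sub, map_smul]
      abel
    have hBa : ‖B ((p - q).fst)‖ ≤ lam * dist p q := by
      have := B.le_opNorm ((p - q).fst)
      nlinarith [norm_nonneg ((p - q).fst), norm_nonneg (B ((p - q).fst)), dist_nonneg (x := p) (y := q)]
    have hinv : ‖r‖⁻¹ * ‖(A - B) u‖ ≤ (1 + lam) * dist p q := by
      calc ‖r‖⁻¹ * ‖(A - B) u‖ = ‖(‖r‖⁻¹ : ℝ) • ((A - B) u)‖ := by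
            rw [norm_smul, Real.norm_eq_abs, abs_of_pos (inv_pos.mpr hNpos)]
      _ = ‖(p - q).snd - B ((p - q).fst)‖ := by rw [hid]
      _ ≤ ‖(p - q).snd‖ + ‖B ((p - q).fst)‖ := norm_sub_le _ _
      _ ≤ dist p q + lam * dist p q := add_le_add h2 hBa
      _ = (1 + lam) * dist p q := by ring
    have hX : ‖(A - B) u‖ ≤ ‖r‖ * ((1 + lam) * dist p q) := by
      have h := mul_le_mul_of_nonneg_left hinv hNpos.le
      rwa [← mul_assoc, mul_inv_cancel₀ hNpos.ne', one_mul] at h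
    calc ‖(A - B) u‖ ≤ ‖r‖ * ((1 + lam) * dist p q) := hX
    _ ≤ (1 + lam) * ((1 + lam) * dist p q) := by
        have hd0 : (0 : ℝ) ≤ dist p q := dist_nonneg
        exact mul_le_mul_of_nonneg_right hNle
          (mul_nonneg (by linarith : (0:ℝ) ≤ 1 + lam) hd0)
    _ = (1 + lam) ^ 2 * dist p q := by ring
  refine le_of_forall_pos_le_add (fun ε hε => ?_)
  have hc : (0 : ℝ) < (1 + lam) ^ 2 := by positivity
  have hε' : (0 : ℝ) < ε / (1 + lam) ^ 2 := by positivity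
  have hlt : Metric.hausdorffDist S T <
      sphereDist (graphSet A) (graphSet B) + ε / (1 + lam) ^ 2 :=
    lt_add_of_pos_right _ hε'
  obtain ⟨q, hq, hdq⟩ := Metric.exists_dist_lt_of_hausdorffDist_lt hp hlt fin
  calc ‖(A - B) u‖ ≤ (1 + lam) ^ 2 * dist p q := key q hq
  _ ≤ (1 + lam) ^ 2 * (sphereDist (graphSet A) (graphSet B) + ε / (1 + lam) ^ 2) :=
      mul_le_mul_of_nonneg_left hdq.le hc.le
  _ = (1 + lam) ^ 2 * sphereDist (graphSet A) (graphSet B) + ε := by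
      field_simp

/-- Lower estimate: the operator norm distance is controlled by the Grassmannian
distance of the graphs. -/
private lemma aux_opnorm_le (A B : E →L[ℝ] F) {lam : ℝ} (hlam : 1 ≤ lam)
    (hA : ‖A‖ ≤ lam) (hB : ‖B‖ ≤ lam) :
    ‖A - B‖ ≤ (1 + lam) ^ 2 * sphereDist (graphSet A) (graphSet B) := by
  have hM : (0 : ℝ) ≤ (1 + lam) ^ 2 * sphereDist (graphSet A) (graphSet B) :=
    mul_nonneg (by positivity) Metric.hausdorffDist_nonneg
  rcases subsingleton_or_nontrivial E with hE | hE
  · have hAB : A - B = 0 := by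
      ext x
      rw [Subsingleton.elim x (0 : E)]
      simp
    rw [hAB, norm_zero]
    exact hM
  · refine ContinuousLinearMap.opNorm_le_bound' _ hM (fun x hx => ?_)
    have hxpos : 0 < ‖x‖ := (norm_nonneg x).lt_of_ne (Ne.symm hx)
    set u : E := ‖x‖⁻¹ • x with hu
    have hu1 : ‖u‖ = 1 := by
      rw [hu, norm_smul, Real.norm_eq_abs, abs_of_pos (inv_pos.mpr hxpos),
        inv_mul_cancel₀ hxpos.ne']
    have h := aux_unit_est A B hlam hA hB hu1
    have hxu : (A - B) x = ‖x‖ • (A - B) u := by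
      rw [hu, map_smul, smul_smul, mul_inv_cancel₀ hxpos.ne', one_smul]
    rw [hxu, norm_smul, Real.norm_eq_abs, abs_of_pos hxpos]
    calc ‖x‖ * ‖(A - B) u‖ ≤ ‖x‖ * ((1 + lam) ^ 2 * sphereDist (graphSet A) (graphSet B)) :=
          mul_le_mul_of_nonneg_left h hxpos.le
    _ = (1 + lam) ^ 2 * sphereDist (graphSet A) (graphSet B) * ‖x‖ := by ring

end Aux

/-- **Graph case (k = 0) of Theorem 3.1 of the paper.** For a differentiable map `f` on an
open convex set `B` with uniformly bounded derivative, the Gauss map of the graph of `f`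
is Lipschitz (with respect to the Grassmannian distance `δ` and the Euclidean product norm
on `E × F`) if and only if `Df` is Lipschitz. -/
theorem gauss_lipschitz_iff_deriv_lipschitz {E F : Type*}
    [NormedAddCommGroup E] [InnerProductSpace ℝ E]
    [NormedAddCommGroup F] [InnerProductSpace ℝ F]
    [FiniteDimensional ℝ E] [FiniteDimensional ℝ F]
    (B : Set E) (hB : IsOpen B) (hBconv : Convex ℝ B)
    (lam : ℝ) (hlam : 1 ≤ lam)
    (f : E → F) (f' : E → E →L[ℝ] F)
    (hderiv : ∀ z ∈ B, HasFDerivWithinAt f (f' z) B z)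
    (hbound : ∀ z ∈ B, ‖f' z‖ ≤ lam) :
    (∃ K > (0 : ℝ), ∀ z ∈ B, ∀ w ∈ B,
        sphereDist (graphSet (f' z)) (graphSet (f' w)) ≤
          K * ‖(WithLp.equiv 2 (E × F)).symm (z, f z) -
                (WithLp.equiv 2 (E × F)).symm (w, f w)‖) ↔
      (∃ L > (0 : ℝ), ∀ z ∈ B, ∀ w ∈ B, ‖f' z - f' w‖ ≤ L * ‖z - w‖) := by
  constructor
  · rintro ⟨K, hK, h⟩
    refine ⟨K * (1 + lam) ^ 3, by positivity, fun z hz w hw => ?_⟩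
    have h1 : ‖f' z - f' w‖ ≤ (1 + lam) ^ 2 * sphereDist (graphSet (f' z)) (graphSet (f' w)) :=
      aux_opnorm_le _ _ hlam (hbound z hz) (hbound w hw)
    have h2 := h z hz w hw
    have h3 : ‖(WithLp.equiv 2 (E × F)).symm (z, f z) -
        (WithLp.equiv 2 (E × F)).symm (w, f w)‖ ≤ (1 + lam) * ‖z - w‖ := by
      rw [WithLp.equiv_symm_apply, ← WithLp.toLp_sub, Prod.mk_sub_mk]
      calc ‖(WithLp.equiv 2 (E × F)).symm (z - w, f z - f w)‖ ≤ ‖z - w‖ + ‖f z - f w‖ :=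
            aux_norm_mk_le _ _
      _ ≤ ‖z - w‖ + lam * ‖z - w‖ := by
          have := hBconv.norm_image_sub_le_of_norm_hasFDerivWithin_le hderiv hbound hw hz
          linarith
      _ = (1 + lam) * ‖z - w‖ := by ring
    have hδ : sphereDist (graphSet (f' z)) (graphSet (f' w)) ≤ K * ((1 + lam) * ‖z - w‖) :=
      le_trans h2 (mul_le_mul_of_nonneg_left h3 hK.le)
    calc ‖f' z - f' w‖ ≤ (1 + lam) ^ 2 * (K * ((1 + lam) * ‖z - w‖)) :=
          le_trans h1 (mul_le_mul_of_nonneg_left hδ (by positivity))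
    _ = K * (1 + lam) ^ 3 * ‖z - w‖ := by ring
  · rintro ⟨L, hL, h⟩
    refine ⟨2 * L, by positivity, fun z hz w hw => ?_⟩
    have hzw : ‖z - w‖ ≤ ‖(WithLp.equiv 2 (E × F)).symm (z, f z) -
        (WithLp.equiv 2 (E × F)).symm (w, f w)‖ := by
      rw [WithLp.equiv_symm_apply, ← WithLp.toLp_sub, Prod.mk_sub_mk]
      exact aux_fst_le ((WithLp.equiv 2 (E × F)).symm (z - w, f z - f w))
    calc sphereDist (graphSet (f' z)) (graphSet (f' w)) ≤ 2 * ‖f' z - f' w‖ :=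
          aux_sphereDist_le _ _
    _ ≤ 2 * (L * ‖z - w‖) := by linarith [h z hz w hw]
    _ ≤ 2 * L * ‖(WithLp.equiv 2 (E × F)).symm (z, f z) -
          (WithLp.equiv 2 (E × F)).symm (w, f w)‖ := by nlinarith
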